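/- arXiv:2509.13791 — 2 statements merged into one kernel-verified Lean document; each statement's English description precedes it below -/
import Mathlib

section
/- For every p ∈ (1,∞), the operator norm of the one-dimensional Gaussian maximal function satisfies ‖𝒢_*^1‖_{L^p(ℝ)} ≥ 𝒢_*^1(|x|^{−1/p})(1), i.e. it is at least the value at the point 1 of the Gaussian maximal function applied to the function x ↦ |x|^{−1/p}. In particular, ‖𝒢_*^1‖_{L^p(ℝ)} ≥ (2^{(p−1)/p}/√(2eπ)) · p/(p−1). -/
open MeasureTheory Filter
open scoped ENNReal NNReal Real Topology

noncomputable section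

/-- The one-dimensional heat (Gaussian) average
`𝒢_t^1 f(x) = (4πt)^{−1/2} ∫ e^{−y²/(4t)} f(x−y) dy`. -/
def gauss1 (t : ℝ) (f : ℝ → ℝ) (x : ℝ) : ℝ :=
  (4 * π * t) ^ (-(1 : ℝ) / 2) * ∫ y : ℝ, Real.exp (-y ^ 2 / (4 * t)) * f (x - y)

/-- The one-dimensional Gaussian maximal function `𝒢_*^1 f(x) = sup_{t>0} |𝒢_t^1 f(x)|`,
valued in `ℝ≥0∞`. -/
def gauss1Max (f : ℝ → ℝ) (x : ℝ) : ℝ≥0∞ :=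
  ⨆ (t : ℝ) (_ : 0 < t), (‖gauss1 t f x‖₊ : ℝ≥0∞)

/-- The operator norm of `𝒢_*^1` on `L^p(ℝ)`: the best constant `C` in
`‖𝒢_*^1 f‖_{L^p} ≤ C ‖f‖_{L^p}` over all `f ∈ L^p(ℝ)`. -/
def gauss1OpNorm (p : ℝ) : ℝ≥0∞ :=
  sInf {C : ℝ≥0∞ | ∀ f : ℝ → ℝ, MemLp f (ENNReal.ofReal p) volume →
    (∫⁻ x, gauss1Max f x ^ p) ^ (1 / p) ≤ C * eLpNorm f (ENNReal.ofReal p) volume}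

namespace GaussAux

/-- the homogeneous test function -/
def hfun (p : ℝ) (x : ℝ) : ℝ := |x| ^ (-(1:ℝ)/p)

/-- truncation of `hfun` to `a ≤ |x| ≤ b` -/
def tr (p a b : ℝ) (x : ℝ) : ℝ := if a ≤ |x| ∧ |x| ≤ b then |x| ^ (-(1:ℝ)/p) else 0

variable {p : ℝ}

lemma hfun_nonneg (x : ℝ) : 0 ≤ hfun p x := Real.rpow_nonneg (abs_nonneg x) _

lemma tr_nonneg (a b x : ℝ) : 0 ≤ tr p a b x := by
  unfold tr; split
  · exact Real.rpow_nonneg (abs_nonneg x) _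
  · exact le_rfl

lemma tr_le_hfun (a b x : ℝ) : tr p a b x ≤ hfun p x := by
  unfold tr hfun; split
  · exact le_rfl
  · exact Real.rpow_nonneg (abs_nonneg x) _

lemma measurable_hfun : Measurable (hfun p) :=
  measurable_id.abs.pow_const _

lemma measurable_tr (a b : ℝ) : Measurable (tr p a b) := by
  unfold tr
  exact Measurable.ite
    ((measurableSet_le measurable_const measurable_id.abs).inter
      (measurableSet_le measurable_id.abs measurable_const)) measurable_hfun measurable_const

lemma tr_le_bound {a : ℝ} (ha : 0 < a) (hp : 1 < p) (b x : ℝ) :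
    tr p a b x ≤ a ^ (-(1:ℝ)/p) := by
  unfold tr
  split
  · rename_i hx
    exact Real.rpow_le_rpow_of_nonpos ha hx.1
      (by rw [neg_div]; exact neg_nonpos.mpr (by positivity))
  · positivity

lemma tr_even (a b x : ℝ) : tr p a b (-x) = tr p a b x := by
  unfold tr; rw [abs_neg]

lemma hfun_even (x : ℝ) : hfun p (-x) = hfun p x := by unfold hfun; rw [abs_neg]

lemma integrable_kernel {t : ℝ} (ht : 0 < t) :
    Integrable (fun y : ℝ => Real.exp (-y ^ 2 / (4 * t))) := by
  have h4t : (0:ℝ) < 1/(4*t) := by positivity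
  simp_rw [show ∀ y : ℝ, -y ^ 2 / (4 * t) = -(1/(4*t)) * y ^ 2 from fun y => by ring]
  exact integrable_exp_neg_mul_sq h4t

end GaussAux
namespace GaussAux
variable {p : ℝ}

lemma exp_le_one_kernel {t y : ℝ} (ht : 0 < t) : Real.exp (-y ^ 2 / (4 * t)) ≤ 1 :=
  Real.exp_le_one_iff.mpr (div_nonpos_of_nonpos_of_nonneg (neg_nonpos.mpr (by positivity)) (by positivity))

lemma neg_one_lt_exponent (hp : 1 < p) : (-1 : ℝ) < -(1:ℝ)/p := by
  rw [neg_div]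
  have h0 : 0 < p := lt_trans one_pos hp
  have : 1/p < 1 := by rw [div_lt_one h0]; exact hp
  linarith

lemma intervalIntegrable_abs_rpow (hp : 1 < p) :
    IntervalIntegrable (fun u : ℝ => |u| ^ (-(1:ℝ)/p)) volume (-1) 1 := by
  have hr := neg_one_lt_exponent hp
  have h01 : IntervalIntegrable (fun u : ℝ => |u| ^ (-(1:ℝ)/p)) volume 0 1 := by
    have := intervalIntegral.intervalIntegrable_rpow' (a := 0) (b := 1) hr
    rw [intervalIntegrable_iff] at this ⊢
    refine this.congr_fun (fun u hu => ?_) measurableSet_uIoc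
    rw [Set.uIoc_of_le (zero_le_one' ℝ)] at hu
    rw [abs_of_pos hu.1]
  have hneg : IntervalIntegrable (fun u : ℝ => |u| ^ (-(1:ℝ)/p)) volume (-1) 0 := by
    have := (IntervalIntegrable.iff_comp_neg (by simp)).mp h01
    simp only [abs_neg, neg_zero] at this
    exact this.symm
  exact hneg.trans h01

lemma integrableOn_hfun_shift (hp : 1 < p) :
    IntegrableOn (fun y : ℝ => |1 - y| ^ (-(1:ℝ)/p)) (Set.Ioc 0 2) volume := by
  have h := (intervalIntegrable_abs_rpow hp).comp_sub_left 1
  have h2 : IntervalIntegrable (fun y : ℝ => |1 - y| ^ (-(1:ℝ)/p)) volume 0 2 := by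
    have := h.symm
    norm_num at this
    exact this
  rw [intervalIntegrable_iff, Set.uIoc_of_le (by norm_num : (0:ℝ) ≤ 2)] at h2
  exact h2

lemma integrable_dom (hp : 1 < p) {t : ℝ} (ht : 0 < t) :
    Integrable (fun y : ℝ => Real.exp (-y ^ 2 / (4 * t)) * hfun p (1 - y)) := by
  set r := -(1:ℝ)/p with hrdef
  have hr0 : r ≤ 0 := by
    rw [hrdef, neg_div]; exact neg_nonpos.mpr (by positivity)
  set G : ℝ → ℝ := (Set.Ioc (0:ℝ) 2).indicator (fun y => |1 - y| ^ r) with hG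
  set H : ℝ → ℝ := fun y => Real.exp (-y ^ 2 / (4 * t)) with hH
  have hGint : Integrable G := by
    rw [hG, integrable_indicator_iff measurableSet_Ioc]
    exact integrableOn_hfun_shift hp
  have hHint : Integrable H := integrable_kernel ht
  have hmeas : AEStronglyMeasurable (fun y : ℝ => Real.exp (-y ^ 2 / (4 * t)) * hfun p (1 - y)) volume := by
    refine (Measurable.mul ?_ ?_).aestronglyMeasurable
    · exact (measurable_id.pow_const 2).neg.div_const _ |>.exp
    · exact measurable_hfun.comp (measurable_const.sub measurable_id)
  refine (hGint.add hHint).mono' hmeas (Eventually.of_forall fun y => ?_)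
  have hF0 : 0 ≤ Real.exp (-y ^ 2 / (4 * t)) * hfun p (1 - y) :=
    mul_nonneg (Real.exp_pos _).le (hfun_nonneg _)
  rw [Real.norm_of_nonneg hF0]
  simp only [Pi.add_apply]
  by_cases hy : y ∈ Set.Ioc (0:ℝ) 2
  · have h1 : Real.exp (-y ^ 2 / (4 * t)) * hfun p (1 - y) ≤ G y := by
      rw [hG, Set.indicator_of_mem hy]
      calc Real.exp (-y ^ 2 / (4 * t)) * hfun p (1 - y)
          ≤ 1 * hfun p (1 - y) :=
            mul_le_mul_of_nonneg_right (exp_le_one_kernel ht) (hfun_nonneg _)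
        _ = |1 - y| ^ r := by rw [one_mul]; rfl
    have h2 : (0:ℝ) ≤ H y := (Real.exp_pos _).le
    calc Real.exp (-y ^ 2 / (4 * t)) * hfun p (1 - y) ≤ G y := h1
      _ ≤ G y + H y := le_add_of_nonneg_right h2
  · have habs : 1 ≤ |1 - y| := by
      rcases not_and_or.mp hy with h | h
      · push_neg at h
        rw [abs_of_nonneg (by linarith)]; linarith
      · push_neg at h
        rw [abs_of_nonpos (by linarith)]; linarith
    have h1 : hfun p (1 - y) ≤ 1 :=
      Real.rpow_le_one_of_one_le_of_nonpos habs hr0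
    have h2 : Real.exp (-y ^ 2 / (4 * t)) * hfun p (1 - y) ≤ H y := by
      rw [hH]
      calc Real.exp (-y ^ 2 / (4 * t)) * hfun p (1 - y)
          ≤ Real.exp (-y ^ 2 / (4 * t)) * 1 :=
            mul_le_mul_of_nonneg_left h1 (Real.exp_pos _).le
        _ = Real.exp (-y ^ 2 / (4 * t)) := mul_one _
    have h3 : (0:ℝ) ≤ G y := by
      rw [hG]
      exact Set.indicator_nonneg (fun x _ => Real.rpow_nonneg (abs_nonneg _) _) y
    linarith

lemma integrable_kernel_mul_bounded {t M : ℝ} (ht : 0 < t) {g : ℝ → ℝ}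
    (hg : Measurable g) (hM : ∀ y, |g y| ≤ M) :
    Integrable (fun y : ℝ => Real.exp (-y ^ 2 / (4 * t)) * g y) := by
  refine ((integrable_kernel ht).const_mul M).mono'
    (((((measurable_id.pow_const 2).neg.div_const _).exp).mul hg).aestronglyMeasurable)
    (Eventually.of_forall fun y => ?_)
  rw [norm_mul, Real.norm_of_nonneg (Real.exp_pos _).le, Real.norm_eq_abs]
  calc Real.exp (-y ^ 2 / (4 * t)) * |g y| ≤ Real.exp (-y ^ 2 / (4 * t)) * M :=
        mul_le_mul_of_nonneg_left (hM y) (Real.exp_pos _).le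
    _ = M * Real.exp (-y ^ 2 / (4 * t)) := mul_comm _ _

end GaussAux
namespace GaussAux
variable {p : ℝ}

lemma coeff_nonneg {t : ℝ} : 0 ≤ (4 * π * t) ^ (-(1 : ℝ) / 2) := by
  rcases le_or_gt 0 (4 * π * t) with h | h
  · exact Real.rpow_nonneg h _
  · rw [Real.rpow_def_of_neg h]
    have hc : Real.cos (-(1:ℝ)/2 * π) = 0 := by
      rw [show (-(1:ℝ)/2 * π) = -(π/2) by ring, Real.cos_neg, Real.cos_pi_div_two]
    rw [hc, mul_zero]

lemma gauss1_nonneg {t : ℝ} {f : ℝ → ℝ} (hf : ∀ x, 0 ≤ f x) (x : ℝ) :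
    0 ≤ gauss1 t f x :=
  mul_nonneg coeff_nonneg
    (integral_nonneg fun y => mul_nonneg (Real.exp_pos _).le (hf _))

lemma gauss1_mono {t : ℝ} {f g : ℝ → ℝ} (x : ℝ)
    (hgi : Integrable (fun y : ℝ => Real.exp (-y ^ 2 / (4 * t)) * g (x - y)))
    (hfg : ∀ u, f u ≤ g u) (hf0 : ∀ u, 0 ≤ f u) :
    gauss1 t f x ≤ gauss1 t g x := by
  unfold gauss1
  refine mul_le_mul_of_nonneg_left ?_ coeff_nonneg
  refine integral_mono_of_nonneg (Eventually.of_forall fun y =>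
    mul_nonneg (Real.exp_pos _).le (hf0 _)) hgi (Eventually.of_forall fun y => ?_)
  exact mul_le_mul_of_nonneg_left (hfg _) (Real.exp_pos _).le

lemma gauss1_even {f : ℝ → ℝ} (hf : ∀ x, f (-x) = f x) (t x : ℝ) :
    gauss1 t f (-x) = gauss1 t f x := by
  unfold gauss1
  congr 1
  rw [← integral_neg_eq_self (fun y : ℝ => Real.exp (-y ^ 2 / (4 * t)) * f (x - y)) volume]
  congr 1
  funext y
  rw [neg_sq, sub_neg_eq_add, show -x - y = -(x + y) by ring, hf]

lemma sq_rpow_neg_half {lam : ℝ} (hlam : 0 < lam) :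
    ((lam ^ 2 : ℝ)) ^ (-(1:ℝ)/2) = lam⁻¹ := by
  rw [← Real.rpow_natCast lam 2, ← Real.rpow_mul hlam.le]
  norm_num
  exact (Real.rpow_neg_one lam)

lemma gauss1_scale (f : ℝ → ℝ) {t lam : ℝ} (ht : 0 < t) (hlam : 0 < lam) :
    gauss1 (t * lam ^ 2) f lam =
      (4 * π * t) ^ (-(1 : ℝ) / 2) * ∫ z : ℝ, Real.exp (-z ^ 2 / (4 * t)) * f (lam * (1 - z)) := by
  unfold gauss1
  have key : ∀ z : ℝ, Real.exp (-z ^ 2 / (4 * t)) * f (lam * (1 - z)) =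
      (fun y : ℝ => Real.exp (-y ^ 2 / (4 * (t * lam ^ 2))) * f (lam - y)) (lam * z) := by
    intro z
    simp only []
    have h1 : -(lam * z) ^ 2 / (4 * (t * lam ^ 2)) = -z ^ 2 / (4 * t) := by
      field_simp
    rw [h1]
    congr 1
    ring_nf
  have := MeasureTheory.Measure.integral_comp_mul_left
    (fun y : ℝ => Real.exp (-y ^ 2 / (4 * (t * lam ^ 2))) * f (lam - y)) lam
  calc (4 * π * (t * lam ^ 2)) ^ (-(1:ℝ)/2) *
        ∫ y : ℝ, Real.exp (-y ^ 2 / (4 * (t * lam ^ 2))) * f (lam - y)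
      = (4 * π * t) ^ (-(1:ℝ)/2) * lam⁻¹ *
        ∫ y : ℝ, Real.exp (-y ^ 2 / (4 * (t * lam ^ 2))) * f (lam - y) := by
        rw [show 4 * π * (t * lam ^ 2) = (4 * π * t) * lam ^ 2 by ring,
          Real.mul_rpow (by positivity) (by positivity), sq_rpow_neg_half hlam]
    _ = (4 * π * t) ^ (-(1:ℝ)/2) * lam⁻¹ *
        (lam * ∫ z : ℝ, Real.exp (-z ^ 2 / (4 * t)) * f (lam * (1 - z))) := by
        congr 1
        simp_rw [key]
        rw [this, abs_of_pos (inv_pos.mpr hlam), smul_eq_mul]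
        field_simp
    _ = (4 * π * t) ^ (-(1:ℝ)/2) *
        ∫ z : ℝ, Real.exp (-z ^ 2 / (4 * t)) * f (lam * (1 - z)) := by
        field_simp

end GaussAux
namespace GaussAux
variable {p : ℝ}

lemma tr_scale_le (hp : 1 < p) {lam n m : ℝ} (hlam1 : 1 ≤ lam) (hlamn : lam ≤ n)
    (hm : 1 ≤ m) (u : ℝ) :
    lam ^ (-(1:ℝ)/p) * tr p (1/m) m u ≤ tr p (1/m) (n*m) (lam * u) := by
  have hlam0 : (0:ℝ) < lam := lt_of_lt_of_le one_pos hlam1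
  by_cases hu : 1/m ≤ |u| ∧ |u| ≤ m
  · have habs : |lam * u| = lam * |u| := by rw [abs_mul, abs_of_pos hlam0]
    have h1 : 1/m ≤ |lam * u| := by
      rw [habs]
      calc 1/m ≤ |u| := hu.1
        _ ≤ lam * |u| := le_mul_of_one_le_left (abs_nonneg u) hlam1
    have h2 : |lam * u| ≤ n * m := by
      rw [habs]
      exact mul_le_mul hlamn hu.2 (abs_nonneg u) (le_trans hlam0.le hlamn)
    unfold tr
    rw [if_pos hu, if_pos ⟨h1, h2⟩, habs, Real.mul_rpow hlam0.le (abs_nonneg u)]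
  · rw [show tr p (1/m) m u = 0 by rw [tr, if_neg hu], mul_zero]
    exact tr_nonneg _ _ _

lemma tr_bounded (hp : 1 < p) {m : ℝ} (hm : 1 ≤ m) (b x : ℝ) :
    |tr p (1/m) b x| ≤ (1/m) ^ (-(1:ℝ)/p) := by
  rw [abs_of_nonneg (tr_nonneg _ _ _)]
  exact tr_le_bound (by positivity) hp b x

lemma main_comparison (hp : 1 < p) {t lam n m : ℝ} (ht : 0 < t)
    (hlam1 : 1 ≤ lam) (hlamn : lam ≤ n) (hm : 1 ≤ m) :
    lam ^ (-(1:ℝ)/p) * gauss1 t (tr p (1/m) m) 1 ≤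
      gauss1 (t * lam ^ 2) (tr p (1/m) (n*m)) lam := by
  have hlam0 : (0:ℝ) < lam := lt_of_lt_of_le one_pos hlam1
  rw [gauss1_scale _ ht hlam0]
  unfold gauss1
  have hbig : Integrable
      (fun z : ℝ => Real.exp (-z ^ 2 / (4 * t)) * tr p (1/m) (n*m) (lam * (1 - z))) := by
    refine integrable_kernel_mul_bounded ht ?_ (fun y => tr_bounded hp hm _ _)
    exact (measurable_tr _ _).comp (measurable_const.mul (measurable_const.sub measurable_id))
  have hint : (∫ z : ℝ, lam ^ (-(1:ℝ)/p) * (Real.exp (-z ^ 2 / (4 * t)) * tr p (1/m) m (1 - z)))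
      ≤ ∫ z : ℝ, Real.exp (-z ^ 2 / (4 * t)) * tr p (1/m) (n*m) (lam * (1 - z)) := by
    refine integral_mono_of_nonneg (Eventually.of_forall fun z => ?_) hbig
      (Eventually.of_forall fun z => ?_)
    · have h1 := tr_nonneg (p := p) (1/m) m (1 - z)
      have h2 : (0:ℝ) ≤ lam ^ (-(1:ℝ)/p) := Real.rpow_nonneg hlam0.le _
      have h3 := (Real.exp_pos (-z ^ 2 / (4 * t))).le
      exact mul_nonneg h2 (mul_nonneg h3 h1)
    · calc lam ^ (-(1:ℝ)/p) * (Real.exp (-z ^ 2 / (4 * t)) * tr p (1/m) m (1 - z))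
          = Real.exp (-z ^ 2 / (4 * t)) * (lam ^ (-(1:ℝ)/p) * tr p (1/m) m (1 - z)) := by ring
        _ ≤ Real.exp (-z ^ 2 / (4 * t)) * tr p (1/m) (n*m) (lam * (1 - z)) :=
            mul_le_mul_of_nonneg_left (tr_scale_le hp hlam1 hlamn hm _) (Real.exp_pos _).le
  rw [integral_const_mul] at hint
  calc lam ^ (-(1:ℝ)/p) * ((4 * π * t) ^ (-(1:ℝ)/2) *
        ∫ y : ℝ, Real.exp (-y ^ 2 / (4 * t)) * tr p (1/m) m (1 - y))
      = (4 * π * t) ^ (-(1:ℝ)/2) * (lam ^ (-(1:ℝ)/p) *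
        ∫ y : ℝ, Real.exp (-y ^ 2 / (4 * t)) * tr p (1/m) m (1 - y)) := by ring
    _ ≤ (4 * π * t) ^ (-(1:ℝ)/2) *
        ∫ z : ℝ, Real.exp (-z ^ 2 / (4 * t)) * tr p (1/m) (n*m) (lam * (1 - z)) :=
        mul_le_mul_of_nonneg_left hint coeff_nonneg

lemma tendsto_c (hp : 1 < p) {t : ℝ} (ht : 0 < t) :
    Tendsto (fun m : ℕ => gauss1 t (tr p (1/(m:ℝ)) (m:ℝ)) 1) atTop
      (𝓝 (gauss1 t (hfun p) 1)) := by
  unfold gauss1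
  refine Tendsto.const_mul _ ?_
  refine tendsto_integral_of_dominated_convergence
    (fun y : ℝ => Real.exp (-y ^ 2 / (4 * t)) * hfun p (1 - y)) ?_ (integrable_dom hp ht) ?_ ?_
  · intro m
    exact ((((measurable_id.pow_const 2).neg.div_const _).exp).mul
      ((measurable_tr _ _).comp (measurable_const.sub measurable_id))).aestronglyMeasurable
  · intro m
    refine Eventually.of_forall fun y => ?_
    rw [Real.norm_of_nonneg (mul_nonneg (Real.exp_pos _).le (tr_nonneg _ _ _))]
    exact mul_le_mul_of_nonneg_left (tr_le_hfun _ _ _) (Real.exp_pos _).le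
  · have hae : ∀ᵐ y : ℝ, y ≠ 1 := by
      rw [ae_iff]
      have : {y : ℝ | ¬ y ≠ 1} = {1} := by ext y; simp
      rw [this]
      exact measure_singleton 1
    filter_upwards [hae] with y hy
    have hpos : 0 < |1 - y| := abs_pos.mpr (sub_ne_zero.mpr (Ne.symm hy))
    have hev : ∀ᶠ m : ℕ in atTop, Real.exp (-y ^ 2 / (4 * t)) * tr p (1/(m:ℝ)) (m:ℝ) (1 - y)
        = Real.exp (-y ^ 2 / (4 * t)) * hfun p (1 - y) := by
      have h1 : ∀ᶠ m : ℕ in atTop, 1/(m:ℝ) ≤ |1 - y| := by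
        have := eventually_gt_atTop (⌈1/|1 - y|⌉₊)
        filter_upwards [this] with m hm
        have hm0 : (0:ℝ) < m := by
          have : (0:ℕ) ≤ ⌈1/|1 - y|⌉₊ := Nat.zero_le _
          exact_mod_cast lt_of_le_of_lt this hm
        rw [div_le_iff₀ hm0] at *
        have : 1/|1 - y| ≤ (m:ℝ) := le_trans (Nat.le_ceil _) (by exact_mod_cast hm.le)
        rw [div_le_iff₀ hpos] at this
        linarith [mul_comm |1 - y| (m:ℝ)]
      have h2 : ∀ᶠ m : ℕ in atTop, |1 - y| ≤ (m:ℝ) := by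
        have := eventually_ge_atTop (⌈|1 - y|⌉₊)
        filter_upwards [this] with m hm
        exact le_trans (Nat.le_ceil _) (by exact_mod_cast hm)
      filter_upwards [h1, h2] with m hm1 hm2
      rw [tr, if_pos ⟨hm1, hm2⟩]
      rfl
    exact Tendsto.congr' (hev.mono fun m hm => hm.symm) tendsto_const_nhds

end GaussAux
namespace GaussAux
variable {p : ℝ}

open intervalIntegral in
lemma II_inv_Icc {a b : ℝ} (ha : 0 < a) (hab : a ≤ b) :
    IntervalIntegrable (fun x : ℝ => x⁻¹) volume a b :=
  intervalIntegrable_inv (f := fun x : ℝ => x)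
    (fun x hx => by rw [Set.uIcc_of_le hab] at hx; exact (lt_of_lt_of_le ha hx.1).ne')
    continuousOn_id

def S (a b : ℝ) : Set ℝ := {x : ℝ | a ≤ |x| ∧ |x| ≤ b}

lemma S_eq {a b : ℝ} (ha : 0 < a) :
    S a b = Set.Icc (-b) (-a) ∪ Set.Icc a b := by
  ext x
  simp only [S, Set.mem_setOf_eq, Set.mem_union, Set.mem_Icc]
  rcases le_or_gt 0 x with h | h
  · rw [abs_of_nonneg h]
    constructor
    · intro ⟨h1, h2⟩; right; exact ⟨h1, h2⟩
    · rintro (⟨h1, h2⟩ | ⟨h1, h2⟩) <;> constructor <;> linarith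
  · rw [abs_of_neg h]
    constructor
    · intro ⟨h1, h2⟩; left; constructor <;> linarith
    · rintro (⟨h1, h2⟩ | ⟨h1, h2⟩) <;> constructor <;> linarith

lemma measurableSet_S {a b : ℝ} : MeasurableSet (S a b) :=
  (measurableSet_le measurable_const measurable_id.abs).inter
    (measurableSet_le measurable_id.abs measurable_const)

lemma integrableOn_inv_abs_Icc {a b : ℝ} (ha : 0 < a) (hab : a ≤ b) :
    IntegrableOn (fun x : ℝ => |x|⁻¹) (Set.Icc a b) volume := by
  have h0 : (0:ℝ) ∉ Set.uIcc a b := by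
    rw [Set.uIcc_of_le hab]
    intro hmem
    exact absurd hmem.1 (not_le.mpr ha)
  have := II_inv_Icc ha hab
  rw [intervalIntegrable_iff, Set.uIoc_of_le hab] at this
  rw [integrableOn_Icc_iff_integrableOn_Ioc]
  refine this.congr_fun (fun x hx => ?_) measurableSet_Ioc
  rw [abs_of_pos (lt_of_lt_of_le ha hx.1.le)]

open intervalIntegral in
lemma setIntegral_inv_abs_Icc {a b : ℝ} (ha : 0 < a) (hab : a ≤ b) :
    ∫ x in Set.Icc a b, |x|⁻¹ = Real.log (b / a) := by
  rw [integral_Icc_eq_integral_Ioc,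
    ← integral_of_le (f := fun x : ℝ => |x|⁻¹) (μ := volume) hab]
  rw [show (∫ x in a..b, |x|⁻¹) = ∫ x in a..b, x⁻¹ from ?_]
  · exact integral_inv (by
      rw [Set.uIcc_of_le hab]; intro hmem; exact absurd hmem.1 (not_le.mpr ha))
  · refine integral_congr (fun x hx => ?_)
    rw [Set.uIcc_of_le hab] at hx
    rw [abs_of_pos (lt_of_lt_of_le ha hx.1)]

lemma neg_Icc_facts {a b : ℝ} (ha : 0 < a) (hab : a ≤ b) :
    IntegrableOn (fun x : ℝ => |x|⁻¹) (Set.Icc (-b) (-a)) volume ∧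
    ∫ x in Set.Icc (-b) (-a), |x|⁻¹ = Real.log (b / a) := by
  have hmap : MeasurePreserving (fun x : ℝ => -x) volume volume :=
    Measure.measurePreserving_neg volume
  have hemb : MeasurableEmbedding (fun x : ℝ => -x) :=
    (Homeomorph.neg ℝ).isClosedEmbedding.measurableEmbedding
  have hpre : (fun x : ℝ => -x) ⁻¹' (Set.Icc (-b) (-a)) = Set.Icc a b := by
    ext x; simp only [Set.mem_preimage, Set.mem_Icc]; constructor <;> intro h <;>
      constructor <;> linarith [h.1, h.2]
  have key := hmap.setIntegral_preimage_emb hemb (fun x : ℝ => |x|⁻¹) (Set.Icc (-b) (-a))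
  rw [hpre] at key
  simp only [abs_neg] at key
  constructor
  · have := (integrableOn_inv_abs_Icc ha hab)
    have h2 : IntegrableOn (fun x : ℝ => |(-x)|⁻¹) (Set.Icc a b) volume := by
      simpa only [abs_neg] using this
    have h3 := (hmap.restrict_preimage_emb hemb (Set.Icc (-b) (-a))).integrable_comp_emb hemb (g := fun x : ℝ => |x|⁻¹)
    rw [hpre] at h3
    exact h3.mp h2
  · rw [← key, setIntegral_inv_abs_Icc ha hab]

lemma integrableOn_inv_abs_S {a b : ℝ} (ha : 0 < a) (hab : a ≤ b) :
    IntegrableOn (fun x : ℝ => |x|⁻¹) (S a b) volume := by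
  rw [S_eq ha]
  exact (neg_Icc_facts ha hab).1.union (integrableOn_inv_abs_Icc ha hab)

lemma setIntegral_inv_abs_S {a b : ℝ} (ha : 0 < a) (hab : a ≤ b) :
    ∫ x in S a b, |x|⁻¹ = 2 * Real.log (b / a) := by
  rw [S_eq ha]
  have hdisj : Disjoint (Set.Icc (-b) (-a)) (Set.Icc a b) := by
    rw [Set.disjoint_iff]
    intro x ⟨h1, h2⟩
    have := h1.2; have := h2.1
    exfalso; linarith
  rw [setIntegral_union hdisj measurableSet_Icc (neg_Icc_facts ha hab).1
    (integrableOn_inv_abs_Icc ha hab), (neg_Icc_facts ha hab).2,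
    setIntegral_inv_abs_Icc ha hab]
  ring

lemma tr_rpow_eq (hp : 1 < p) {a b : ℝ} (x : ℝ) :
    (tr p a b x) ^ p = Set.indicator (S a b) (fun x => |x|⁻¹) x := by
  have hp0 : p ≠ 0 := by positivity
  unfold tr
  by_cases hx : a ≤ |x| ∧ |x| ≤ b
  · rw [if_pos hx, Set.indicator_of_mem (show x ∈ S a b from hx),
      ← Real.rpow_mul (abs_nonneg x), show (-(1:ℝ)/p) * p = -1 by field_simp,
      Real.rpow_neg_one]
  · rw [if_neg hx, Set.indicator_of_notMem (show x ∉ S a b from hx), Real.zero_rpow hp0]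

lemma lintegral_tr_rpow (hp : 1 < p) {a b : ℝ} (ha : 0 < a) (hab : a ≤ b) :
    ∫⁻ x, (‖tr p a b x‖₊ : ℝ≥0∞) ^ p = ENNReal.ofReal (2 * Real.log (b / a)) := by
  have hp0 : (0:ℝ) ≤ p := by positivity
  have heq : ∀ x : ℝ, (‖tr p a b x‖₊ : ℝ≥0∞) ^ p
      = ENNReal.ofReal (Set.indicator (S a b) (fun x => |x|⁻¹) x) := by
    intro x
    rw [← enorm_eq_nnnorm, Real.enorm_eq_ofReal (tr_nonneg _ _ _),
      ENNReal.ofReal_rpow_of_nonneg (tr_nonneg _ _ _) hp0, tr_rpow_eq hp]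
  simp_rw [heq]
  rw [← ofReal_integral_eq_lintegral_ofReal]
  · rw [integral_indicator measurableSet_S, setIntegral_inv_abs_S ha hab]
  · rw [integrable_indicator_iff measurableSet_S]
    exact integrableOn_inv_abs_S ha hab
  · exact Eventually.of_forall fun x =>
      Set.indicator_nonneg (fun y _ => inv_nonneg.mpr (abs_nonneg y)) x

end GaussAux
namespace GaussAux
variable {p : ℝ}

lemma abs_rpow_exponent (hp : 1 < p) (x : ℝ) : (|x| ^ (-(1:ℝ)/p)) ^ p = |x|⁻¹ := by
  rw [← Real.rpow_mul (abs_nonneg x), show (-(1:ℝ)/p) * p = -1 by field_simp,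
    Real.rpow_neg_one]

lemma ofReal_p_ne_zero (hp : 1 < p) : ENNReal.ofReal p ≠ 0 :=
  (ENNReal.ofReal_pos.mpr (by positivity)).ne'

lemma eLpNorm_tr (hp : 1 < p) {a b : ℝ} (ha : 0 < a) (hab : a ≤ b) :
    eLpNorm (tr p a b) (ENNReal.ofReal p) volume
      = ENNReal.ofReal (2 * Real.log (b / a)) ^ (1/p) := by
  rw [eLpNorm_eq_lintegral_rpow_enorm_toReal (ofReal_p_ne_zero hp) ENNReal.ofReal_ne_top,
    ENNReal.toReal_ofReal (by positivity : (0:ℝ) ≤ p)]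
  simp_rw [enorm_eq_nnnorm]
  rw [lintegral_tr_rpow hp ha hab]

lemma memLp_tr (hp : 1 < p) {a b : ℝ} (ha : 0 < a) (hab : a ≤ b) :
    MemLp (tr p a b) (ENNReal.ofReal p) volume := by
  constructor
  · exact (measurable_tr _ _).aestronglyMeasurable
  · rw [eLpNorm_tr hp ha hab]
    exact ENNReal.rpow_lt_top_of_nonneg (by positivity) ENNReal.ofReal_ne_top

lemma gauss1Max_even {f : ℝ → ℝ} (hf : ∀ x, f (-x) = f x) (x : ℝ) :
    gauss1Max f (-x) = gauss1Max f x := by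
  unfold gauss1Max
  refine iSup_congr fun t => iSup_congr fun _ => ?_
  rw [gauss1_even hf]

lemma le_gauss1Max {f : ℝ → ℝ} {t : ℝ} (ht : 0 < t) (x : ℝ) :
    (‖gauss1 t f x‖₊ : ℝ≥0∞) ≤ gauss1Max f x :=
  le_iSup₂ (f := fun (t : ℝ) (_ : 0 < t) => (‖gauss1 t f x‖₊ : ℝ≥0∞)) t ht

lemma maximal_lower_pos (hp : 1 < p) {t m n x : ℝ} (ht : 0 < t) (hm : 1 ≤ m)
    (hx1 : 1 ≤ x) (hxn : x ≤ n) :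
    ENNReal.ofReal (gauss1 t (tr p (1/m) m) 1 * x ^ (-(1:ℝ)/p))
      ≤ gauss1Max (tr p (1/m) (n*m)) x := by
  have hcomp := main_comparison hp ht hx1 hxn hm
  calc ENNReal.ofReal (gauss1 t (tr p (1/m) m) 1 * x ^ (-(1:ℝ)/p))
      = ENNReal.ofReal (x ^ (-(1:ℝ)/p) * gauss1 t (tr p (1/m) m) 1) := by rw [mul_comm]
    _ ≤ ENNReal.ofReal (gauss1 (t * x ^ 2) (tr p (1/m) (n*m)) x) :=
        ENNReal.ofReal_le_ofReal hcomp
    _ ≤ (‖gauss1 (t * x ^ 2) (tr p (1/m) (n*m)) x‖₊ : ℝ≥0∞) := Real.ofReal_le_enorm _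
    _ ≤ gauss1Max (tr p (1/m) (n*m)) x := le_gauss1Max (by positivity) x

lemma maximal_lower_pointwise (hp : 1 < p) {t m n : ℝ} (ht : 0 < t) (hm : 1 ≤ m)
    {x : ℝ} (hx : x ∈ S 1 n) :
    ENNReal.ofReal (gauss1 t (tr p (1/m) m) 1 * |x| ^ (-(1:ℝ)/p))
      ≤ gauss1Max (tr p (1/m) (n*m)) x := by
  obtain ⟨hx1, hxn⟩ := hx
  rcases le_or_gt 0 x with h | h
  · rw [abs_of_nonneg h] at *
    exact maximal_lower_pos hp ht hm hx1 hxn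
  · rw [abs_of_neg h] at *
    have heven := gauss1Max_even (f := tr p (1/m) (n*m)) (fun y => tr_even _ _ _) (-x)
    rw [neg_neg] at heven
    rw [heven]
    exact maximal_lower_pos hp ht hm hx1 hxn

lemma maximal_lower_lintegral (hp : 1 < p) {t m n : ℝ} (ht : 0 < t) (hm : 1 ≤ m)
    (hn : 1 ≤ n) :
    ENNReal.ofReal ((gauss1 t (tr p (1/m) m) 1) ^ p * (2 * Real.log n))
      ≤ ∫⁻ x, gauss1Max (tr p (1/m) (n*m)) x ^ p := by
  set c := gauss1 t (tr p (1/m) m) 1 with hcdef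
  have hc0 : 0 ≤ c := gauss1_nonneg (fun u => tr_nonneg _ _ _) 1
  have hp0 : (0:ℝ) ≤ p := by positivity
  have hint : Integrable ((S 1 n).indicator (fun x : ℝ => c ^ p * |x|⁻¹)) := by
    rw [integrable_indicator_iff measurableSet_S]
    exact (integrableOn_inv_abs_S one_pos hn).const_mul _
  calc ENNReal.ofReal (c ^ p * (2 * Real.log n))
      = ENNReal.ofReal (∫ x in S 1 n, c ^ p * |x|⁻¹) := by
        rw [integral_const_mul, setIntegral_inv_abs_S one_pos hn, div_one]
    _ = ENNReal.ofReal (∫ x, (S 1 n).indicator (fun x : ℝ => c ^ p * |x|⁻¹) x) := by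
        rw [integral_indicator measurableSet_S]
    _ = ∫⁻ x, ENNReal.ofReal ((S 1 n).indicator (fun x : ℝ => c ^ p * |x|⁻¹) x) := by
        refine ofReal_integral_eq_lintegral_ofReal hint ?_
        exact Eventually.of_forall fun x => Set.indicator_nonneg
          (fun y _ => mul_nonneg (Real.rpow_nonneg hc0 _) (inv_nonneg.mpr (abs_nonneg y))) x
    _ ≤ ∫⁻ x, gauss1Max (tr p (1/m) (n*m)) x ^ p := by
        refine lintegral_mono fun x => ?_
        by_cases hx : x ∈ S 1 n
        · rw [Set.indicator_of_mem hx]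
          have hptw := maximal_lower_pointwise hp ht hm hx
          have : ENNReal.ofReal (c ^ p * |x|⁻¹)
              = ENNReal.ofReal (c * |x| ^ (-(1:ℝ)/p)) ^ p := by
            rw [ENNReal.ofReal_rpow_of_nonneg
              (mul_nonneg hc0 (Real.rpow_nonneg (abs_nonneg x) _)) hp0,
              Real.mul_rpow hc0 (Real.rpow_nonneg (abs_nonneg x) _),
              abs_rpow_exponent hp]
          rw [this]
          exact ENNReal.rpow_le_rpow hptw hp0
        · rw [Set.indicator_of_notMem hx, ENNReal.ofReal_zero]
          exact zero_le

end GaussAux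
namespace GaussAux
variable {p : ℝ}

lemma c_le_D (hp : 1 < p) {C : ℝ≥0∞}
    (hC : ∀ f : ℝ → ℝ, MemLp f (ENNReal.ofReal p) volume →
      (∫⁻ x, gauss1Max f x ^ p) ^ (1 / p) ≤ C * eLpNorm f (ENNReal.ofReal p) volume)
    (hCtop : C ≠ ⊤) {t : ℝ} (ht : 0 < t) {m : ℝ} (hm : 1 ≤ m) :
    gauss1 t (tr p (1/m) m) 1 ≤ C.toReal := by
  have hp0 : (0:ℝ) < p := by positivity
  set c := gauss1 t (tr p (1/m) m) 1 with hcdef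
  have hc0 : 0 ≤ c := gauss1_nonneg (fun u => tr_nonneg _ _ _) 1
  set D := C.toReal with hDdef
  have hD0 : 0 ≤ D := ENNReal.toReal_nonneg
  have hm0 : (0:ℝ) < m := lt_of_lt_of_le one_pos hm
  have hmm1 : (1:ℝ) ≤ m * m := one_le_mul_of_one_le_of_one_le hm hm
  have key : ∀ n : ℝ, 1 ≤ n →
      c ^ p * (2 * Real.log n) ≤ D ^ p * (2 * (Real.log n + Real.log (m*m))) := by
    intro n hn
    have hn0 : (0:ℝ) < n := lt_of_lt_of_le one_pos hn
    have h1m : 1/m ≤ n*m := by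
      have h1 : 1/m ≤ 1 := by rw [div_le_one hm0]; exact hm
      have h2 : (1:ℝ) ≤ n*m := one_le_mul_of_one_le_of_one_le hn hm
      linarith
    have harg : (n*m)/(1/m) = n*(m*m) := by field_simp
    have hlogarg : Real.log ((n*m)/(1/m)) = Real.log n + Real.log (m*m) := by
      rw [harg, Real.log_mul hn0.ne' (by positivity)]
    have hlogn0 : 0 ≤ Real.log n := Real.log_nonneg hn
    have hlogmm0 : 0 ≤ Real.log (m*m) := Real.log_nonneg hmm1
    have hmem := hC (tr p (1/m) (n*m)) (memLp_tr hp (by positivity) h1m)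
    rw [eLpNorm_tr hp (by positivity) h1m, hlogarg] at hmem
    have hlow := maximal_lower_lintegral (t := t) hp ht hm hn
    have chain : (ENNReal.ofReal (c ^ p * (2 * Real.log n))) ^ (1/p)
        ≤ C * (ENNReal.ofReal (2 * (Real.log n + Real.log (m*m)))) ^ (1/p) := by
      refine le_trans (ENNReal.rpow_le_rpow hlow (by positivity)) ?_
      rw [show (2:ℝ) * (Real.log n + Real.log (m*m))
        = 2 * Real.log n + 2 * Real.log (m*m) by ring] at hmem ⊢
      exact hmem
    have hfin : C * (ENNReal.ofReal (2 * (Real.log n + Real.log (m*m)))) ^ (1/p) ≠ ⊤ :=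
      ENNReal.mul_ne_top hCtop
        (ENNReal.rpow_ne_top_of_nonneg (by positivity) ENNReal.ofReal_ne_top)
    have hreal := ENNReal.toReal_mono hfin chain
    rw [ENNReal.toReal_mul, ← ENNReal.toReal_rpow, ← ENNReal.toReal_rpow,
      ENNReal.toReal_ofReal (by positivity),
      ENNReal.toReal_ofReal (by positivity)] at hreal
    -- hreal : (c^p * (2*log n))^(1/p) ≤ D * (2*(log n + log(m*m)))^(1/p)
    have hq := Real.rpow_le_rpow (by positivity) hreal hp0.le
    rw [← Real.rpow_mul (by positivity), one_div, inv_mul_cancel₀ hp0.ne', Real.rpow_one,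
      Real.mul_rpow hD0 (Real.rpow_nonneg (by positivity) _),
      ← Real.rpow_mul (by positivity), inv_mul_cancel₀ hp0.ne', Real.rpow_one] at hq
    exact hq
  by_contra hcon
  push_neg at hcon
  have hpow : D ^ p < c ^ p := Real.rpow_lt_rpow hD0 hcon hp0
  have hdiff : 0 < c ^ p - D ^ p := by linarith
  set K := D ^ p * Real.log (m*m) / (c ^ p - D ^ p) with hKdef
  have hK0 : 0 ≤ K := div_nonneg (mul_nonneg (Real.rpow_nonneg hD0 _) (Real.log_nonneg hmm1)) hdiff.le
  have hn := key (Real.exp (K + 1)) (by nlinarith [Real.add_one_le_exp (K+1)])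
  rw [Real.log_exp] at hn
  -- c^p * (2*(K+1)) ≤ D^p * (2*((K+1) + log(m*m)))
  have hKle : (c ^ p - D ^ p) * (K + 1) ≤ D ^ p * Real.log (m*m) := by nlinarith
  rw [hKdef] at hKle
  have : (c ^ p - D ^ p) * (D ^ p * Real.log (m*m) / (c ^ p - D ^ p) + 1)
      = D ^ p * Real.log (m*m) + (c ^ p - D ^ p) := by field_simp
  rw [this] at hKle
  linarith

lemma part1 (hp : 1 < p) : gauss1Max (hfun p) 1 ≤ gauss1OpNorm p := by
  refine le_sInf fun C hC => ?_
  by_cases hCtop : C = ⊤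
  · exact hCtop ▸ le_top
  refine iSup₂_le fun t ht => ?_
  rw [← enorm_eq_nnnorm, Real.enorm_eq_ofReal (gauss1_nonneg hfun_nonneg 1)]
  have hlim : gauss1 t (hfun p) 1 ≤ C.toReal := by
    refine le_of_tendsto (tendsto_c hp ht) ?_
    filter_upwards [eventually_ge_atTop 1] with m hm
    exact c_le_D hp hC hCtop ht (by exact_mod_cast hm)
  calc ENNReal.ofReal (gauss1 t (hfun p) 1) ≤ ENNReal.ofReal C.toReal :=
      ENNReal.ofReal_le_ofReal hlim
    _ = C := ENNReal.ofReal_toReal hCtop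

end GaussAux
namespace GaussAux
variable {p : ℝ}

open intervalIntegral in
lemma intJ (hp : 1 < p) :
    ∫ y in Set.Icc (-1:ℝ) 1, |1 - y| ^ (-(1:ℝ)/p)
      = 2 ^ ((p-1)/p) * (p/(p-1)) := by
  have hp0 : (0:ℝ) < p := by positivity
  have hr1 : (-1:ℝ) < -(1:ℝ)/p := neg_one_lt_exponent hp
  have hrp : -(1:ℝ)/p + 1 = (p-1)/p := by field_simp; ring
  have hrppos : (0:ℝ) < (p-1)/p := by
    apply div_pos <;> linarith
  rw [integral_Icc_eq_integral_Ioc,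
    ← integral_of_le (f := fun y : ℝ => |1 - y| ^ (-(1:ℝ)/p)) (μ := volume)
      (by norm_num : (-1:ℝ) ≤ 1),
    integral_comp_sub_left (fun u : ℝ => |u| ^ (-(1:ℝ)/p)) 1,
    show (1:ℝ) - 1 = 0 by norm_num, show (1:ℝ) - -1 = 2 by norm_num,
    show (∫ x in (0:ℝ)..2, |x| ^ (-(1:ℝ)/p)) = ∫ x in (0:ℝ)..2, x ^ (-(1:ℝ)/p) from
      integral_congr fun x hx => by
        rw [Set.uIcc_of_le (by norm_num : (0:ℝ) ≤ 2)] at hx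
        rw [abs_of_nonneg hx.1],
    integral_rpow (Or.inl hr1), hrp,
    Real.zero_rpow hrppos.ne', sub_zero, div_div_eq_mul_div, mul_div_assoc]

lemma const_eq (hp : 1 < p) :
    (2*π) ^ (-(1:ℝ)/2) * Real.exp (-(1:ℝ)/2) * (2 ^ ((p-1)/p) * (p/(p-1)))
      = 2 ^ ((p - 1) / p) / Real.sqrt (2 * Real.exp 1 * π) * (p / (p - 1)) := by
  have h2pi : (0:ℝ) ≤ 2*π := by positivity
  have hsqrt : Real.sqrt (2 * Real.exp 1 * π) = (2*π) ^ ((1:ℝ)/2) * Real.exp ((1:ℝ)/2) := by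
    rw [show (2 * Real.exp 1 * π : ℝ) = (2*π) * Real.exp 1 by ring,
      Real.sqrt_eq_rpow, Real.mul_rpow h2pi (Real.exp_pos 1).le, ← Real.exp_one_rpow ((1:ℝ)/2)]
  rw [hsqrt]
  rw [show (-(1:ℝ)/2) = -((1:ℝ)/2) by norm_num, Real.rpow_neg h2pi, Real.exp_neg]
  field_simp

lemma part2 (hp : 1 < p) :
    ENNReal.ofReal (2 ^ ((p - 1) / p) / Real.sqrt (2 * Real.exp 1 * π) * (p / (p - 1)))
      ≤ gauss1Max (hfun p) 1 := by
  have ht : (0:ℝ) < 1/2 := by norm_num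
  -- lower bound for the integral
  set F : ℝ → ℝ := fun y => Real.exp (-y ^ 2 / (4 * (1/2))) * hfun p (1 - y) with hF
  set G : ℝ → ℝ := (Set.Icc (-1:ℝ) 1).indicator
    (fun y => Real.exp (-(1:ℝ)/2) * |1 - y| ^ (-(1:ℝ)/p)) with hG
  have hGF : ∀ y, G y ≤ F y := by
    intro y
    by_cases hy : y ∈ Set.Icc (-1:ℝ) 1
    · rw [hG, Set.indicator_of_mem hy]
      obtain ⟨hy1, hy2⟩ := hy
      have hee : Real.exp (-(1:ℝ)/2) ≤ Real.exp (-y ^ 2 / (4 * (1/2))) := by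
        apply Real.exp_le_exp.mpr
        nlinarith
      exact mul_le_mul_of_nonneg_right hee (Real.rpow_nonneg (abs_nonneg _) _)
    · rw [hG, Set.indicator_of_notMem hy]
      exact mul_nonneg (Real.exp_pos _).le (hfun_nonneg _)
  have hFint : Integrable F := integrable_dom hp ht
  have hGint : ∫ y, G y = Real.exp (-(1:ℝ)/2) * (2 ^ ((p-1)/p) * (p/(p-1))) := by
    rw [hG, integral_indicator measurableSet_Icc, integral_const_mul, intJ hp]
  have hIle : Real.exp (-(1:ℝ)/2) * (2 ^ ((p-1)/p) * (p/(p-1))) ≤ ∫ y, F y := by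
    rw [← hGint]
    refine integral_mono_of_nonneg (Eventually.of_forall fun y => ?_) hFint
      (Eventually.of_forall hGF)
    exact Set.indicator_nonneg
      (fun z _ => mul_nonneg (Real.exp_pos _).le (Real.rpow_nonneg (abs_nonneg _) _)) y
  have hcoeff : ((4 * π * (1/2) : ℝ)) ^ (-(1:ℝ)/2) = (2*π) ^ (-(1:ℝ)/2) := by
    norm_num [show (4 * π * (1/2) : ℝ) = 2*π by ring]
  have hmain : 2 ^ ((p - 1) / p) / Real.sqrt (2 * Real.exp 1 * π) * (p / (p - 1))
      ≤ gauss1 (1/2) (hfun p) 1 := by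
    rw [← const_eq hp]
    unfold gauss1
    rw [hcoeff, mul_assoc]
    refine mul_le_mul_of_nonneg_left ?_ (Real.rpow_nonneg (by positivity) _)
    exact hIle
  calc ENNReal.ofReal (2 ^ ((p - 1) / p) / Real.sqrt (2 * Real.exp 1 * π) * (p / (p - 1)))
      ≤ ENNReal.ofReal (gauss1 (1/2) (hfun p) 1) := ENNReal.ofReal_le_ofReal hmain
    _ ≤ (‖gauss1 (1/2) (hfun p) 1‖₊ : ℝ≥0∞) := Real.ofReal_le_enorm _
    _ ≤ gauss1Max (hfun p) 1 := le_gauss1Max ht 1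

end GaussAux

/-- For every `p ∈ (1,∞)`, `‖𝒢_*^1‖_{L^p(ℝ)} ≥ 𝒢_*^1(|x|^{−1/p})(1)`; in particular
`‖𝒢_*^1‖_{L^p(ℝ)} ≥ (2^{(p−1)/p}/√(2eπ)) · p/(p−1)`. -/
theorem gauss1OpNorm_ge_homogeneous (p : ℝ) (hp : 1 < p) :
    gauss1Max (fun x : ℝ => |x| ^ (-(1 : ℝ) / p)) 1 ≤ gauss1OpNorm p ∧
    ENNReal.ofReal (2 ^ ((p - 1) / p) / Real.sqrt (2 * Real.exp 1 * π) * (p / (p - 1))) ≤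
      gauss1OpNorm p := by
  constructor
  · exact GaussAux.part1 hp
  · exact le_trans (GaussAux.part2 hp) (GaussAux.part1 hp)

end
end

section
/- For every p ∈ (1,∞), the operator norm of the one-dimensional Gaussian maximal function satisfies ‖𝒢_*^1‖_{L^p(ℝ)} ≥ (2p/(π e^p))^{1/(2p)} (p/(p−1))^{1/p}; this lower bound is witnessed by testing 𝒢_*^1 on the Gaussian function γ(x) = (4π)^{−1/2} e^{−x²/4}. -/
open MeasureTheory Filter
open scoped ENNReal NNReal Real Topology

noncomputable section

def gam (x : ℝ) : ℝ := (4 * π) ^ (-(1 : ℝ) / 2) * Real.exp (-x ^ 2 / 4)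

lemma integral_rexp_quadratic {a : ℝ} (ha : 0 < a) (b c : ℝ) :
    ∫ x : ℝ, Real.exp (-a * x ^ 2 + b * x + c)
      = Real.sqrt (π / a) * Real.exp (c + b ^ 2 / (4 * a)) := by
  have h (x : ℝ) : Real.exp (-a * x ^ 2 + b * x + c)
      = Real.exp (-a * (x - b / (2 * a)) ^ 2) * Real.exp (c + b ^ 2 / (4 * a)) := by
    rw [← Real.exp_add]; congr 1; field_simp; ring
  simp_rw [h, integral_mul_const]
  rw [integral_sub_right_eq_self (fun x : ℝ => Real.exp (-a * x ^ 2)) (b / (2 * a)),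
    integral_gaussian]

lemma gauss1_gam {t : ℝ} (ht : 0 < t) (x : ℝ) :
    gauss1 t gam x = (4 * π * (1 + t)) ^ (-(1 : ℝ) / 2) * Real.exp (-x ^ 2 / (4 * (1 + t))) := by
  have ht1 : (0:ℝ) < 1 + t := by linarith
  have ha : 0 < (1 + t) / (4 * t) := by positivity
  have key : ∀ y : ℝ, Real.exp (-y ^ 2 / (4 * t)) * gam (x - y)
      = (4 * π) ^ (-(1 : ℝ) / 2)
        * Real.exp (-((1 + t) / (4 * t)) * y ^ 2 + (x / 2) * y + (-x ^ 2 / 4)) := by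
    intro y
    unfold gam
    rw [show Real.exp (-y ^ 2 / (4 * t)) * ((4 * π) ^ (-(1 : ℝ) / 2) * Real.exp (-(x - y) ^ 2 / 4))
        = (4 * π) ^ (-(1 : ℝ) / 2) * Real.exp (-y ^ 2 / (4 * t) + -(x - y) ^ 2 / 4) from by
      rw [Real.exp_add]; ring]
    congr 2
    field_simp
    ring
  unfold gauss1
  simp_rw [key]
  rw [integral_const_mul, integral_rexp_quadratic ha]
  have hE : -x ^ 2 / 4 + (x / 2) ^ 2 / (4 * ((1 + t) / (4 * t))) = -x ^ 2 / (4 * (1 + t)) := by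
    field_simp; ring
  rw [hE]
  have hgoal : (4 * π * t) ^ (-(1:ℝ)/2) * ((4 * π) ^ (-(1:ℝ)/2) * Real.sqrt (π / ((1 + t) / (4 * t))))
      = (4 * π * (1 + t)) ^ (-(1:ℝ)/2) := by
    rw [← Real.exp_log (show (0:ℝ) < (4 * π * t) ^ (-(1:ℝ)/2) * ((4 * π) ^ (-(1:ℝ)/2) * Real.sqrt (π / ((1 + t) / (4 * t)))) from by positivity),
      ← Real.exp_log (show (0:ℝ) < (4 * π * (1 + t)) ^ (-(1:ℝ)/2) from by positivity)]
    congr 1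
    rw [Real.log_mul (by positivity) (by positivity), Real.log_mul (by positivity) (by positivity),
      Real.log_rpow (by positivity), Real.log_rpow (by positivity), Real.log_rpow (by positivity),
      Real.log_sqrt (by positivity), Real.log_div (by positivity) (by positivity),
      Real.log_div (by positivity) (by positivity),
      Real.log_mul (by positivity) (by positivity), Real.log_mul (by positivity) (by positivity),
      Real.log_mul (by positivity) (by positivity), Real.log_mul (by positivity) (by positivity),
      Real.log_mul (by positivity) (by positivity)]
    ring
  rw [show (4 * π * t) ^ (-(1:ℝ)/2) * ((4 * π) ^ (-(1:ℝ)/2) * (Real.sqrt (π / ((1 + t) / (4 * t))) * Real.exp (-x ^ 2 / (4 * (1 + t)))))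
      = ((4 * π * t) ^ (-(1:ℝ)/2) * ((4 * π) ^ (-(1:ℝ)/2) * Real.sqrt (π / ((1 + t) / (4 * t))))) * Real.exp (-x ^ 2 / (4 * (1 + t))) from by ring,
    hgoal]

lemma le_gauss1Max (f : ℝ → ℝ) (x : ℝ) {t : ℝ} (ht : 0 < t) :
    (‖gauss1 t f x‖₊ : ℝ≥0∞) ≤ gauss1Max f x :=
  le_iSup₂ (f := fun (t : ℝ) (_ : 0 < t) => ((‖gauss1 t f x‖₊ : ℝ≥0∞))) t ht

lemma ofReal_gauss1_le (x : ℝ) {t : ℝ} (ht : 0 < t) :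
    ENNReal.ofReal ((4 * π * (1 + t)) ^ (-(1:ℝ)/2) * Real.exp (-x ^ 2 / (4 * (1 + t))))
      ≤ gauss1Max gam x := by
  rw [← gauss1_gam ht x, ← Real.enorm_eq_ofReal (by rw [gauss1_gam ht x]; positivity)]
  exact le_gauss1Max _ _ ht

lemma pointwise_bound (x : ℝ) :
    ENNReal.ofReal ((4 * π * max 1 (x ^ 2 / 2)) ^ (-(1 : ℝ) / 2) * Real.exp (-(1 : ℝ) / 2))
      ≤ gauss1Max gam x := by
  rcases le_or_gt (x ^ 2 / 2) 1 with h | h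
  · rw [max_eq_left h]
    have hx2 : x ^ 2 ≤ 2 := by linarith
    have key : ∀ t : ℝ, 0 < t →
        ENNReal.ofReal ((4 * π * (1 + t)) ^ (-(1:ℝ)/2) * Real.exp (-(1:ℝ)/2))
          ≤ gauss1Max gam x := by
      intro t ht
      refine le_trans (ENNReal.ofReal_le_ofReal ?_) (ofReal_gauss1_le x ht)
      have harg : -(1:ℝ)/2 ≤ -x ^ 2 / (4 * (1 + t)) := by
        rw [neg_div, neg_div, neg_le_neg_iff, div_le_div_iff₀ (by positivity) (by norm_num)]
        nlinarith
      exact mul_le_mul_of_nonneg_left (Real.exp_le_exp.mpr harg) (by positivity)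
    have tend : Tendsto (fun n : ℕ =>
        ENNReal.ofReal ((4 * π * (1 + 1/(n+1))) ^ (-(1:ℝ)/2) * Real.exp (-(1:ℝ)/2))) atTop
        (nhds (ENNReal.ofReal ((4 * π * (1 + 0)) ^ (-(1:ℝ)/2) * Real.exp (-(1:ℝ)/2)))) := by
      have hc : ContinuousAt (fun s : ℝ =>
          (4 * π * (1 + s)) ^ (-(1:ℝ)/2) * Real.exp (-(1:ℝ)/2)) 0 := by
        apply ContinuousAt.mul _ continuousAt_const
        exact (Real.continuousAt_rpow_const _ _ (Or.inl (by positivity))).comp (by fun_prop)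
      exact (ENNReal.continuous_ofReal.tendsto _).comp
        (hc.tendsto.comp tendsto_one_div_add_atTop_nhds_zero_nat)
    rw [show (1:ℝ) + 0 = 1 from by norm_num] at tend
    exact le_of_tendsto' tend (fun n => key _ (by positivity))
  · have hx : (0:ℝ) < x ^ 2 / 2 - 1 := by linarith
    have hx0 : x ≠ 0 := by intro h0; rw [h0] at h; norm_num at h
    rw [max_eq_right h.le]
    refine le_trans (le_of_eq ?_) (ofReal_gauss1_le x hx)
    rw [show 1 + (x ^ 2 / 2 - 1) = x ^ 2 / 2 from by ring,
      show -x ^ 2 / (4 * (x ^ 2 / 2)) = -(1:ℝ)/2 from by field_simp; ring]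

lemma integral_gfun {p : ℝ} (hp : 1 < p) :
    Integrable (fun x : ℝ => (max 1 (x ^ 2 / 2)) ^ (-(p/2))) ∧
    ∫ x : ℝ, (max 1 (x ^ 2 / 2)) ^ (-(p/2)) = 2 * Real.sqrt 2 * p / (p - 1) := by
  set g : ℝ → ℝ := fun x => (max 1 (x ^ 2 / 2)) ^ (-(p/2)) with hg
  have hs : (0:ℝ) < Real.sqrt 2 := Real.sqrt_pos.mpr (by norm_num)
  set s : ℝ := Real.sqrt 2 with hsdef
  have hs2 : s ^ 2 = 2 := Real.sq_sqrt (by norm_num)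
  have hss : -s ≤ s := by linarith
  have heven : ∀ x : ℝ, g (-x) = g x := by intro x; simp [hg, neg_sq]
  have hg_Ioi : Set.EqOn g (fun x => 2 ^ (p/2) * x ^ (-p)) (Set.Ioi s) := by
    intro x hx
    have hx0 : 0 < x := hs.trans hx
    have hx2 : 2 ≤ x ^ 2 / 2 * 2 := by nlinarith [Set.mem_Ioi.mp hx]
    have h1 : (1:ℝ) ≤ x ^ 2 / 2 := by nlinarith
    simp only [hg, max_eq_right h1]
    rw [Real.div_rpow (by positivity) (by norm_num), ← Real.rpow_natCast x 2,
      ← Real.rpow_mul hx0.le, div_eq_mul_inv, ← Real.rpow_neg (by norm_num : (0:ℝ) ≤ 2)]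
    rw [show (2:ℕ) * (-(p/2)) = -p from by push_cast; ring, show -(-(p/2)) = p/2 from by ring]
    ring
  have hg_Ioc : Set.EqOn g (fun _ => (1:ℝ)) (Set.Ioc (-s) s) := by
    intro x hx
    obtain ⟨hx1, hx2⟩ := hx
    have h1 : x ^ 2 / 2 ≤ 1 := by nlinarith
    simp [hg, max_eq_left h1]
  have A1 : IntegrableOn (fun x : ℝ => x ^ (-p)) (Set.Ioi s) :=
    integrableOn_Ioi_rpow_of_lt (by linarith) hs
  have A1' : IntegrableOn g (Set.Ioi s) :=
    IntegrableOn.congr_fun (A1.const_mul _) (fun x hx => (hg_Ioi hx).symm) measurableSet_Ioi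
  have A2 : IntegrableOn g (Set.Ioc (-s) s) := by
    refine (IntegrableOn.congr_fun ?_ (fun x hx => (hg_Ioc hx).symm) measurableSet_Ioc)
    exact integrableOn_const measure_Ioc_lt_top.ne
  have A3 : IntegrableOn g (Set.Iic (-s)) := by
    have hiff := (Measure.measurePreserving_neg (volume : Measure ℝ)).integrableOn_comp_preimage
      (Homeomorph.neg ℝ).measurableEmbedding (f := g) (s := Set.Ici s)
    have hpre : (Neg.neg ⁻¹' Set.Ici s : Set ℝ) = Set.Iic (-s) := by
      ext x; simp [neg_le]
    have hcomp : (g ∘ Neg.neg) = g := funext heven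
    rw [hpre, hcomp] at hiff
    exact hiff.mpr (Iff.mpr integrableOn_Ici_iff_integrableOn_Ioi A1')
  have hIic : IntegrableOn g (Set.Iic s) := by
    rw [← Set.Iic_union_Ioc_eq_Iic hss]; exact A3.union A2
  have hint : Integrable g := by
    rw [← integrableOn_univ, ← Set.Iic_union_Ioi (a := s), integrableOn_union]
    exact ⟨hIic, A1'⟩
  refine ⟨hint, ?_⟩
  have E1 : ∫ x in Set.Ioi s, g x = 2 ^ (p/2) * (-s ^ (-p + 1) / (-p + 1)) := by
    rw [setIntegral_congr_fun measurableSet_Ioi hg_Ioi, integral_const_mul,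
      integral_Ioi_rpow_of_lt (by linarith) hs]
  have E2 : ∫ x in Set.Ioc (-s) s, g x = 2 * s := by
    rw [setIntegral_congr_fun measurableSet_Ioc hg_Ioc, setIntegral_const]
    rw [Real.volume_real_Ioc_of_le hss, smul_eq_mul, mul_one]
    ring
  have E3 : ∫ x in Set.Iic (-s), g x = 2 ^ (p/2) * (-s ^ (-p + 1) / (-p + 1)) := by
    calc ∫ x in Set.Iic (-s), g x = ∫ x in Set.Iic (-s), g (-x) := by simp_rw [heven]
    _ = ∫ x in Set.Ioi (-(-s)), g x := integral_comp_neg_Iic (-s) g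
    _ = 2 ^ (p/2) * (-s ^ (-p + 1) / (-p + 1)) := by rw [neg_neg]; exact E1
  have hsplit : ∫ x, g x = ((∫ x in Set.Iic (-s), g x) + ∫ x in Set.Ioc (-s) s, g x)
      + ∫ x in Set.Ioi s, g x := by
    rw [← intervalIntegral.integral_Iic_add_Ioi hIic A1']
    congr 1
    rw [← Set.Iic_union_Ioc_eq_Iic hss,
      setIntegral_union (Set.Iic_disjoint_Ioc le_rfl) measurableSet_Ioc A3 A2]
  rw [hsplit, E3, E2, E1]
  have hp1 : p - 1 ≠ 0 := by intro h; linarith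
  have hkey : (2:ℝ) ^ (p/2) * (-s ^ (-p + 1) / (-p + 1)) = s / (p - 1) := by
    have h1 : s ^ (-p + 1) = 2 ^ (-(p/2)) * s := by
      rw [Real.rpow_add hs, Real.rpow_one]
      congr 1
      rw [hsdef, Real.sqrt_eq_rpow, ← Real.rpow_mul (by norm_num : (0:ℝ) ≤ 2)]
      congr 1; ring
    have h2 : (2:ℝ) ^ (p/2) * 2 ^ (-p/2) = 1 := by
      rw [← Real.rpow_add (by norm_num : (0:ℝ) < 2), show p / 2 + -p / 2 = 0 from by ring,
        Real.rpow_zero]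
    have hp2 : -p + 1 ≠ 0 := by intro h; apply hp1; linarith
    rw [h1]
    field_simp
    have h3 : (2:ℝ) ^ (p/2) * 2 ^ (-(p/2)) = 1 := by
      rw [← Real.rpow_add (by norm_num : (0:ℝ) < 2), add_neg_cancel, Real.rpow_zero]
    linear_combination (1 - p) * h3
  rw [hkey]
  field_simp
  ring

lemma gam_nonneg (x : ℝ) : 0 ≤ gam x := by unfold gam; positivity

lemma gam_rpow (p : ℝ) (x : ℝ) :
    gam x ^ p = ((4 * π) ^ (-(1:ℝ)/2)) ^ p * Real.exp (-(p/4) * x ^ 2) := by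
  unfold gam
  rw [Real.mul_rpow (by positivity) (Real.exp_nonneg _), ← Real.exp_mul,
    show -x ^ 2 / 4 * p = -(p/4) * x ^ 2 from by ring]

lemma integrable_gam_rpow {p : ℝ} (hp : 0 < p) :
    Integrable (fun x : ℝ => gam x ^ p) := by
  simp_rw [gam_rpow]
  exact (integrable_exp_neg_mul_sq (by positivity)).const_mul _

lemma integral_gam_rpow {p : ℝ} (hp : 0 < p) :
    ∫ x : ℝ, gam x ^ p = ((4 * π) ^ (-(1:ℝ)/2)) ^ p * Real.sqrt (π / (p/4)) := by
  simp_rw [gam_rpow]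
  rw [integral_const_mul, integral_gaussian]

lemma lint_gam {p : ℝ} (hp : 0 < p) :
    ∫⁻ x, (‖gam x‖₊ : ℝ≥0∞) ^ p
      = ENNReal.ofReal (((4 * π) ^ (-(1:ℝ)/2)) ^ p * Real.sqrt (π / (p/4))) := by
  rw [← integral_gam_rpow hp,
    ofReal_integral_eq_lintegral_ofReal (integrable_gam_rpow hp)
      (ae_of_all _ fun x => Real.rpow_nonneg (gam_nonneg x) p)]
  refine lintegral_congr fun x => ?_
  rw [← enorm_eq_nnnorm, Real.enorm_eq_ofReal (gam_nonneg x), ENNReal.ofReal_rpow_of_nonneg (gam_nonneg x) hp.le]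

def hfun (x : ℝ) : ℝ := (4 * π * max 1 (x ^ 2 / 2)) ^ (-(1:ℝ)/2) * Real.exp (-(1:ℝ)/2)

lemma hfun_nonneg (x : ℝ) : 0 ≤ hfun x := by unfold hfun; positivity

lemma hfun_rpow (p : ℝ) (x : ℝ) :
    hfun x ^ p = ((4 * π) ^ (-(1:ℝ)/2) * Real.exp (-(1:ℝ)/2)) ^ p
      * (max 1 (x ^ 2 / 2)) ^ (-(p/2)) := by
  have hm : (0:ℝ) < max 1 (x ^ 2 / 2) := lt_of_lt_of_le one_pos (le_max_left _ _)
  unfold hfun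
  rw [Real.mul_rpow (by positivity) hm.le, Real.mul_rpow (by positivity) (Real.exp_nonneg _),
    Real.mul_rpow (by positivity) (Real.exp_nonneg _),
    Real.mul_rpow (by positivity) (by positivity), ← Real.rpow_mul hm.le,
    show -(1:ℝ)/2 * p = -(p/2) from by ring]
  ring

lemma integrable_hfun_rpow {p : ℝ} (hp : 1 < p) :
    Integrable (fun x : ℝ => hfun x ^ p) := by
  simp_rw [hfun_rpow]
  exact (integral_gfun hp).1.const_mul _

lemma integral_hfun_rpow {p : ℝ} (hp : 1 < p) :
    ∫ x : ℝ, hfun x ^ p = ((4 * π) ^ (-(1:ℝ)/2) * Real.exp (-(1:ℝ)/2)) ^ p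
      * (2 * Real.sqrt 2 * p / (p - 1)) := by
  simp_rw [hfun_rpow]
  rw [integral_const_mul, (integral_gfun hp).2]

lemma lint_hfun {p : ℝ} (hp : 1 < p) :
    ∫⁻ x, ENNReal.ofReal (hfun x) ^ p
      = ENNReal.ofReal (((4 * π) ^ (-(1:ℝ)/2) * Real.exp (-(1:ℝ)/2)) ^ p
        * (2 * Real.sqrt 2 * p / (p - 1))) := by
  rw [← integral_hfun_rpow hp,
    ofReal_integral_eq_lintegral_ofReal (integrable_hfun_rpow hp)
      (ae_of_all _ fun x => Real.rpow_nonneg (hfun_nonneg x) p)]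
  exact lintegral_congr fun x =>
    ENNReal.ofReal_rpow_of_nonneg (hfun_nonneg x) (by linarith)

lemma scalar_id {p : ℝ} (hp : 1 < p) :
    ((2 * p / (π * Real.exp 1 ^ p)) ^ (1 / (2 * p)) * (p / (p - 1)) ^ (1 / p)) ^ p
        * (((4 * π) ^ (-(1:ℝ)/2)) ^ p * Real.sqrt (π / (p/4)))
      = ((4 * π) ^ (-(1:ℝ)/2) * Real.exp (-(1:ℝ)/2)) ^ p
        * (2 * Real.sqrt 2 * p / (p - 1)) := by
  have hp0 : (0:ℝ) < p := by linarith
  have hp1 : (0:ℝ) < p - 1 := by linarith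
  have hpi : (0:ℝ) < π := Real.pi_pos
  rw [← Real.exp_log (show (0:ℝ) <
      ((2 * p / (π * Real.exp 1 ^ p)) ^ (1 / (2 * p)) * (p / (p - 1)) ^ (1 / p)) ^ p
        * (((4 * π) ^ (-(1:ℝ)/2)) ^ p * Real.sqrt (π / (p/4))) from by positivity),
    ← Real.exp_log (show (0:ℝ) < ((4 * π) ^ (-(1:ℝ)/2) * Real.exp (-(1:ℝ)/2)) ^ p
        * (2 * Real.sqrt 2 * p / (p - 1)) from by positivity)]
  congr 1
  rw [show (4:ℝ) = 2 ^ (2:ℕ) from by norm_num]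
  simp (disch := positivity) only [Real.log_mul, Real.log_rpow, Real.log_div, Real.log_exp,
    Real.log_sqrt, Real.log_pow]
  field_simp
  ring

lemma pointwise_bound' (x : ℝ) : ENNReal.ofReal (hfun x) ≤ gauss1Max gam x :=
  pointwise_bound x

/-- For every `p ∈ (1,∞)`, `‖𝒢_*^1‖_{L^p(ℝ)} ≥ (2p/(πe^p))^{1/(2p)} (p/(p−1))^{1/p}`,
witnessed by testing `𝒢_*^1` on the Gaussian `γ(x) = (4π)^{−1/2} e^{−x²/4}`. -/
theorem gauss1OpNorm_ge_gaussian (p : ℝ) (hp : 1 < p) :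
    ENNReal.ofReal ((2 * p / (π * Real.exp 1 ^ p)) ^ (1 / (2 * p)) * (p / (p - 1)) ^ (1 / p)) *
        eLpNorm (fun x : ℝ => (4 * π) ^ (-(1 : ℝ) / 2) * Real.exp (-x ^ 2 / 4))
          (ENNReal.ofReal p) volume ≤
      (∫⁻ x, gauss1Max (fun y : ℝ => (4 * π) ^ (-(1 : ℝ) / 2) * Real.exp (-y ^ 2 / 4)) x ^ p) ^
        (1 / p) ∧
    ENNReal.ofReal ((2 * p / (π * Real.exp 1 ^ p)) ^ (1 / (2 * p)) * (p / (p - 1)) ^ (1 / p)) ≤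
      gauss1OpNorm p := by
  have hgam_eq : (fun y : ℝ => (4 * π) ^ (-(1 : ℝ) / 2) * Real.exp (-y ^ 2 / 4)) = gam := rfl
  rw [hgam_eq]
  have hp0 : (0:ℝ) < p := by linarith
  have hp1 : (0:ℝ) < p - 1 := by linarith
  set Cp : ℝ := (2 * p / (π * Real.exp 1 ^ p)) ^ (1 / (2 * p)) * (p / (p - 1)) ^ (1 / p) with hCp
  have hCppos : 0 < Cp :=
    mul_pos (Real.rpow_pos_of_pos (by positivity) _)
      (Real.rpow_pos_of_pos (div_pos hp0 hp1) _)
  have hne : ENNReal.ofReal p ≠ 0 := by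
    simp [ENNReal.ofReal_eq_zero, not_le, hp0]
  have hsnorm : eLpNorm gam (ENNReal.ofReal p) volume
      = ENNReal.ofReal (((4 * π) ^ (-(1:ℝ)/2)) ^ p * Real.sqrt (π / (p/4))) ^ (1/p) := by
    rw [eLpNorm_eq_lintegral_rpow_enorm_toReal hne ENNReal.ofReal_ne_top,
      ENNReal.toReal_ofReal hp0.le]
    simp only [enorm_eq_nnnorm]
    rw [lint_gam hp0]
  have hApos : (0:ℝ) < ((4 * π) ^ (-(1:ℝ)/2)) ^ p * Real.sqrt (π / (p/4)) := by positivity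
  have habs : ∀ c a : ℝ, 0 < c → 0 < a →
      ENNReal.ofReal c * ENNReal.ofReal a ^ (1/p) = ENNReal.ofReal (c ^ p * a) ^ (1/p) := by
    intro c a hc ha
    rw [ENNReal.ofReal_mul (by positivity), ENNReal.mul_rpow_of_nonneg _ _ (by positivity),
      ← ENNReal.ofReal_rpow_of_nonneg hc.le hp0.le, ← ENNReal.rpow_mul,
      mul_one_div_cancel hp0.ne', ENNReal.rpow_one]
  have part1 : ENNReal.ofReal Cp * eLpNorm gam (ENNReal.ofReal p) volume
      ≤ (∫⁻ x, gauss1Max gam x ^ p) ^ (1/p) := by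
    calc ENNReal.ofReal Cp * eLpNorm gam (ENNReal.ofReal p) volume
        = (ENNReal.ofReal (Cp ^ p
            * (((4*π) ^ (-(1:ℝ)/2)) ^ p * Real.sqrt (π/(p/4))))) ^ (1/p) := by
          rw [hsnorm]; exact habs _ _ hCppos hApos
      _ = (∫⁻ x, ENNReal.ofReal (hfun x) ^ p) ^ (1/p) := by
          rw [hCp, scalar_id hp, ← lint_hfun hp]
      _ ≤ (∫⁻ x, gauss1Max gam x ^ p) ^ (1/p) := by
          refine ENNReal.rpow_le_rpow (lintegral_mono fun x => ?_) (by positivity)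
          exact ENNReal.rpow_le_rpow (pointwise_bound' x) hp0.le
  refine ⟨part1, le_sInf fun C hC => ?_⟩
  have hcont : Continuous gam := by unfold gam; fun_prop
  have hfin : eLpNorm gam (ENNReal.ofReal p) volume ≠ ⊤ := by
    rw [hsnorm]
    exact (ENNReal.rpow_lt_top_of_nonneg (by positivity) ENNReal.ofReal_ne_top).ne
  have hne0 : eLpNorm gam (ENNReal.ofReal p) volume ≠ 0 := by
    rw [hsnorm]
    exact (ENNReal.rpow_pos (ENNReal.ofReal_pos.mpr hApos) ENNReal.ofReal_ne_top).ne'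
  have hmem : MemLp gam (ENNReal.ofReal p) volume :=
    ⟨hcont.aestronglyMeasurable, lt_of_le_of_ne le_top hfin⟩
  exact (ENNReal.mul_le_mul_iff_left hne0 hfin).mp (part1.trans (hC gam hmem))

end
end
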